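/- (Whipple's transformation for terminating balanced-type ₄F₃ series.) Let n ∈ ℕ and A, B, C, D, E, F ∈ ℂ with D+E+F = A+B+C+1−n. Assume (D)_k ≠ 0, (E)_k ≠ 0, (F)_k ≠ 0, (A+1−n−E)_k ≠ 0, and (A+1−n−F)_k ≠ 0 for all k ≤ n. Then Σ_{k=0}^{n} [(−n)_k (A)_k (B)_k (C)_k] / [k! (D)_k (E)_k (F)_k] = [(E−A)_n (F−A)_n] / [(E)_n (F)_n] · Σ_{k=0}^{n} [(−n)_k (A)_k (D−B)_k (D−C)_k] / [k! (D)_k (A+1−n−E)_k (A+1−n−F)_k]. -/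

import Mathlib

open Finset

/-- Pochhammer symbol `(a)_k = a (a+1) ⋯ (a+k-1)`. -/
noncomputable def poch (a : ℂ) (k : ℕ) : ℂ := ∏ i ∈ Finset.range k, (a + i)

/-- The Wilson polynomial `W_n(z; t1,t2,t3,t4)` in the variable `z` (with `x = -z²`). -/
noncomputable def wilson (n : ℕ) (z t1 t2 t3 t4 : ℂ) : ℂ :=
  poch (t1 + t2) n * poch (t1 + t3) n * poch (t1 + t4) n *
    ∑ k ∈ Finset.range (n + 1),
      (poch (-(n : ℂ)) k * poch (t1 + t2 + t3 + t4 + (n : ℂ) - 1) k *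
        poch (t1 + z) k * poch (t1 - z) k) /
      ((k.factorial : ℂ) * poch (t1 + t2) k * poch (t1 + t3) k * poch (t1 + t4) k)

lemma poch_zero (a : ℂ) : poch a 0 = 1 := by simp [poch]

lemma poch_one (a : ℂ) : poch a 1 = a := by simp [poch]

lemma poch_succ (a : ℂ) (k : ℕ) : poch a (k + 1) = poch a k * (a + k) := by
  simp [poch, Finset.prod_range_succ]

lemma poch_succ' (a : ℂ) (k : ℕ) : poch a (k + 1) = a * poch (a + 1) k := by
  rw [poch, Finset.prod_range_succ']
  simp only [Nat.cast_zero, add_zero, poch]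
  rw [mul_comm]
  congr 1
  apply Finset.prod_congr rfl
  intro i _
  push_cast
  ring

lemma poch_add (a : ℂ) (m l : ℕ) : poch a (m + l) = poch a m * poch (a + m) l := by
  rw [poch, Finset.prod_range_add]
  congr 1
  apply Finset.prod_congr rfl
  intro i _
  push_cast
  ring

lemma poch_reflect (a : ℂ) (n : ℕ) : poch a n = (-1) ^ n * poch (1 - a - n) n := by
  rw [poch, ← Finset.prod_range_reflect]
  have : ((-1 : ℂ)) ^ n * poch (1 - a - n) n
      = ∏ i ∈ range n, (-1 * (1 - a - (n:ℂ) + i)) := by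
    rw [Finset.prod_mul_distrib, Finset.prod_const, Finset.card_range, poch]
  rw [this]
  apply Finset.prod_congr rfl
  intro i hi
  simp only [Finset.mem_range] at hi
  have h1 : (↑(n - 1 - i) : ℂ) = (n : ℂ) - 1 - i := by
    have : n - 1 - i = n - (1 + i) := by omega
    rw [this, Nat.cast_sub (by omega)]
    push_cast; ring
  rw [h1]; ring

lemma poch_sub_one (x : ℂ) (m : ℕ) :
    poch (x + 1) m - poch x m = m * poch (x + 1) (m - 1) := by
  cases m with
  | zero => simp [poch_zero]
  | succ l =>
    rw [poch_succ, poch_succ']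
    simp only [Nat.add_sub_cancel]
    push_cast; ring

lemma poch_neg_nat {n k : ℕ} (h : k ≤ n) :
    poch (-(n : ℂ)) k = (-1) ^ k * (n.choose k : ℂ) * (k.factorial : ℂ) := by
  induction k with
  | zero => simp [poch_zero]
  | succ l ih =>
    have hl : l ≤ n := by omega
    rw [poch_succ, ih hl]
    have hc : ((n.choose (l + 1) : ℕ) : ℂ) * (l + 1 : ℂ) = (n.choose l : ℂ) * ((n : ℂ) - l) := by
      have := Nat.choose_succ_right_eq n l
      have h2 : ((n.choose (l + 1) * (l + 1) : ℕ) : ℂ) = ((n.choose l * (n - l) : ℕ) : ℂ) := by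
        rw [this]
      push_cast [Nat.cast_sub hl] at h2
      convert h2 using 2
    have : (-(n : ℂ) + l) = -((n : ℂ) - l) := by ring
    rw [this]
    push_cast
    calc (-1:ℂ) ^ l * (n.choose l : ℂ) * (l.factorial : ℂ) * -((n:ℂ) - l)
        = (-1) ^ (l+1) * ((n.choose l : ℂ) * ((n:ℂ) - l)) * (l.factorial : ℂ) := by ring
      _ = (-1) ^ (l+1) * ((n.choose (l+1) : ℂ) * ((l:ℂ) + 1)) * (l.factorial : ℂ) := by rw [← hc]
      _ = (-1) ^ (l+1) * (n.choose (l+1) : ℂ) * ((l+1).factorial : ℂ) := by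
          rw [Nat.factorial_succ]; push_cast; ring

lemma poch_shift (a : ℂ) (i : ℕ) : a * poch (a + 1) i = poch a i * (a + i) := by
  rw [← poch_succ', poch_succ]

lemma sum_pascal_split (n : ℕ) (r : ℕ → ℂ) :
    ∑ k ∈ range (n + 2), (-1 : ℂ) ^ k * ((n+1).choose k : ℂ) * r k
      = (∑ k ∈ range (n + 1), (-1 : ℂ) ^ k * (n.choose k : ℂ) * r k)
        + ∑ i ∈ range (n + 1), (-1 : ℂ) ^ (i+1) * (n.choose i : ℂ) * r (i+1) := by
  have h := Finset.sum_range_succ' (fun k => (-1 : ℂ) ^ k * ((n+1).choose k : ℂ) * r k) (n+1)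
  have h3 := Finset.sum_range_succ (fun k => (-1 : ℂ) ^ k * ((n).choose k : ℂ) * r k) (n+1)
  have h2 := Finset.sum_range_succ' (fun k => (-1 : ℂ) ^ k * ((n).choose k : ℂ) * r k) (n+1)
  simp only [Nat.choose_succ_self, Nat.cast_zero, Nat.choose_zero_right, Nat.cast_one] at h3 h2
  simp only [Nat.choose_zero_right, Nat.cast_one] at h
  rw [h2] at h3
  rw [h]
  have e1 : ∀ i ∈ range (n + 1), (-1 : ℂ) ^ (i+1) * ((n+1).choose (i+1) : ℂ) * r (i+1)
      = ((-1 : ℂ) ^ (i+1) * ((n).choose (i+1) : ℂ) * r (i+1)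
        + (-1 : ℂ) ^ (i+1) * ((n).choose i : ℂ) * r (i+1)) := by
    intro i _
    rw [Nat.choose_succ_succ n i]
    push_cast; ring
  rw [Finset.sum_congr rfl e1, Finset.sum_add_distrib]
  linear_combination h3

set_option maxHeartbeats 1600000 in
lemma saalschutz : ∀ (n : ℕ) (a b c : ℂ),
    ∑ k ∈ range (n + 1), (-1 : ℂ) ^ k * (n.choose k : ℂ) * poch a k * poch b k *
        poch (c + k) (n - k) * poch (1 + a + b - c - n + k) (n - k)
      = (-1) ^ n * poch (c - a) n * poch (c - b) n := by
  intro n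
  induction n with
  | zero => intro a b c; simp [poch_zero]
  | succ n ih =>
    intro a b c
    set d : ℂ := a + b - c - n with hd
    have hgoal : (∑ k ∈ range (n + 1 + 1), (-1 : ℂ) ^ k * ((n+1).choose k : ℂ) * poch a k * poch b k *
        poch (c + k) (n + 1 - k) * poch (1 + a + b - c - (n+1 : ℕ) + k) (n + 1 - k))
        = ∑ k ∈ range (n + 2), (-1 : ℂ) ^ k * ((n+1).choose k : ℂ) *
            (poch a k * poch b k * poch (c + k) (n + 1 - k) * poch (d + k) (n + 1 - k)) := by
      apply Finset.sum_congr rfl; intro k _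
      have : 1 + a + b - c - (n+1 : ℕ) + (k : ℂ) = d + k := by rw [hd]; push_cast; ring
      rw [this]; ring
    rw [hgoal, sum_pascal_split]
    -- names for the three relevant sums
    set S0 : ℂ := ∑ k ∈ range (n + 1), (-1 : ℂ) ^ k * (n.choose k : ℂ) * poch a k * poch b k *
        poch (c + k) (n - k) * poch (1 + a + b - c - n + k) (n - k) with hS0
    set T1 : ℂ := ∑ k ∈ range (n + 1), (-1 : ℂ) ^ k * (n.choose k : ℂ) * (k : ℂ) * poch a k *
        poch b k * poch (c + k) (n - k) * poch (d + 1 + k) (n - k) with hT1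
    -- Step 2: the unshifted part
    have step2 : (∑ k ∈ range (n + 1), (-1 : ℂ) ^ k * (n.choose k : ℂ) *
          (poch a k * poch b k * poch (c + k) (n + 1 - k) * poch (d + k) (n + 1 - k)))
        = (c + n) * d * S0 + (c + n) * T1 := by
      rw [hS0, hT1, Finset.mul_sum, Finset.mul_sum, ← Finset.sum_add_distrib]
      apply Finset.sum_congr rfl
      intro k hk
      simp only [Finset.mem_range] at hk
      have hkn : k ≤ n := by omega
      have h1 : n + 1 - k = (n - k) + 1 := by omega
      have hcast : ((n - k : ℕ) : ℂ) = (n : ℂ) - k := by rw [Nat.cast_sub hkn]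
      have hc : poch (c + k) (n + 1 - k) = poch (c + k) (n - k) * (c + n) := by
        rw [h1, poch_succ, hcast]; ring_nf
      have hd2 : poch (d + k) (n + 1 - k) = (d + k) * poch (d + 1 + k) (n - k) := by
        rw [h1, poch_succ']; ring_nf
      have hbase : (1 : ℂ) + a + b - c - n + k = d + 1 + k := by rw [hd]; ring
      rw [hc, hd2, hbase]
      ring
    have ihS0 : S0 = (-1) ^ n * poch (c - a) n * poch (c - b) n := by
      rw [hS0]; exact ih a b c
    rw [step2, ihS0]
    -- Step 3: evaluate the shifted part plus a*b*(second IH)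
    have ih2 := ih (a+1) (b+1) (c+1)
    have hc2 : (c : ℂ) + 1 - (a + 1) = c - a := by ring
    have hc3 : (c : ℂ) + 1 - (b + 1) = c - b := by ring
    rw [hc2, hc3] at ih2
    -- rewrite the summand of ih2
    have ih2' : ∑ i ∈ range (n + 1), (-1 : ℂ) ^ i * (n.choose i : ℂ) * (a + i) * (b + i) *
          poch a i * poch b i * poch (c + 1 + i) (n - i) * poch (d + 2 + i) (n - i)
        = a * b * ((-1) ^ n * poch (c - a) n * poch (c - b) n) := by
      rw [← ih2, Finset.mul_sum]
      apply Finset.sum_congr rfl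
      intro i _
      have h1 : (1 : ℂ) + (a + 1) + (b + 1) - (c + 1) - n + i = d + 2 + i := by rw [hd]; ring
      rw [h1]
      have h2 : a * poch (a + 1) i = poch a i * (a + i) := poch_shift a i
      have h3 : b * poch (b + 1) i = poch b i * (b + i) := poch_shift b i
      calc (-1:ℂ) ^ i * ((n.choose i : ℂ)) * (a + i) * (b + i) *
              poch a i * poch b i * poch (c + 1 + i) (n - i) * poch (d + 2 + i) (n - i)
          = (-1:ℂ) ^ i * ((n.choose i : ℂ)) * (poch a i * (a + i)) * (poch b i * (b + i)) *
              poch (c + 1 + i) (n - i) * poch (d + 2 + i) (n - i) := by ring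
        _ = _ := by rw [← h2, ← h3]; ring
    -- shifted sum rewritten
    have hSb : ∑ i ∈ range (n + 1), (-1 : ℂ) ^ (i+1) * (n.choose i : ℂ) *
          (poch a (i+1) * poch b (i+1) * poch (c + ((i+1 : ℕ) : ℂ)) (n + 1 - (i+1)) *
            poch (d + ((i+1 : ℕ) : ℂ)) (n + 1 - (i+1)))
        = - ∑ i ∈ range (n + 1), (-1 : ℂ) ^ i * (n.choose i : ℂ) * (a + i) * (b + i) *
            poch a i * poch b i * poch (c + 1 + i) (n - i) * poch (d + 1 + i) (n - i) := by
      rw [← Finset.sum_neg_distrib]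
      apply Finset.sum_congr rfl
      intro i _
      have e1 : n + 1 - (i+1) = n - i := by omega
      rw [e1, poch_succ a i, poch_succ b i]
      push_cast
      rw [show c + ((i:ℂ)+1) = c + 1 + i from by ring, show d + ((i:ℂ)+1) = d + 1 + i from by ring]
      ring
    -- termwise difference identity
    have hPQ : ∀ i ∈ range (n + 1),
        ((-1 : ℂ) ^ i * (n.choose i : ℂ) * (a + i) * (b + i) * poch a i * poch b i *
            poch (c + 1 + i) (n - i) * poch (d + 2 + i) (n - i))
          - ((-1 : ℂ) ^ i * (n.choose i : ℂ) * (a + i) * (b + i) * poch a i * poch b i *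
            poch (c + 1 + i) (n - i) * poch (d + 1 + i) (n - i))
        = (c + n) * ((-1 : ℂ) ^ i * (n.choose i : ℂ) * ((n : ℂ) - i) * (a + i) * (b + i) *
            poch a i * poch b i * poch (c + 1 + i) (n - 1 - i) * poch (d + 2 + i) (n - 1 - i)) := by
      intro i hi
      simp only [Finset.mem_range] at hi
      by_cases hin : i = n
      · subst hin
        simp only [Nat.sub_self, poch_zero, sub_self]
        ring_nf
      · have hilt : i < n := by omega
        have hsub : (poch (d + 1 + i + 1) (n - i) - poch (d + 1 + i) (n - i))
            = ((n - i : ℕ) : ℂ) * poch (d + 1 + i + 1) ((n - i) - 1) := poch_sub_one (d + 1 + i) (n - i)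
        rw [show d + 1 + (i:ℂ) + 1 = d + 2 + i from by ring] at hsub
        rw [show (n - i) - 1 = n - 1 - i from by omega] at hsub
        rw [Nat.cast_sub (by omega : i ≤ n)] at hsub
        have hc4 : poch (c + 1 + i) (n - i) = poch (c + 1 + i) (n - 1 - i) * (c + n) := by
          rw [show n - i = (n - 1 - i) + 1 from by omega, poch_succ,
            show n - 1 - i = n - (1 + i) from by omega,
            Nat.cast_sub (by omega : 1 + i ≤ n)]
          push_cast
          ring_nf
        calc ((-1 : ℂ) ^ i * (n.choose i : ℂ) * (a + i) * (b + i) * poch a i * poch b i *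
            poch (c + 1 + i) (n - i) * poch (d + 2 + i) (n - i))
          - ((-1 : ℂ) ^ i * (n.choose i : ℂ) * (a + i) * (b + i) * poch a i * poch b i *
            poch (c + 1 + i) (n - i) * poch (d + 1 + i) (n - i))
            = (-1 : ℂ) ^ i * (n.choose i : ℂ) * (a + i) * (b + i) * poch a i * poch b i *
              poch (c + 1 + i) (n - i) *
              (poch (d + 2 + i) (n - i) - poch (d + 1 + i) (n - i)) := by ring
          _ = (-1 : ℂ) ^ i * (n.choose i : ℂ) * (a + i) * (b + i) * poch a i * poch b i *
              (poch (c + 1 + i) (n - 1 - i) * (c + n)) *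
              (((n : ℂ) - i) * poch (d + 2 + i) (n - 1 - i)) := by rw [← hc4, ← hsub]
          _ = _ := by ring
    -- T1 in terms of w
    have hT1w : T1 = - ∑ i ∈ range (n + 1), (-1 : ℂ) ^ i * (n.choose i : ℂ) * ((n : ℂ) - i) *
        (a + i) * (b + i) * poch a i * poch b i * poch (c + 1 + i) (n - 1 - i) *
        poch (d + 2 + i) (n - 1 - i) := by
      rw [hT1, Finset.sum_range_succ'
        (fun k => (-1 : ℂ) ^ k * (n.choose k : ℂ) * (k : ℂ) * poch a k * poch b k *
          poch (c + k) (n - k) * poch (d + 1 + k) (n - k)) n]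
      simp only [Nat.cast_zero, mul_zero, zero_mul, add_zero]
      rw [Finset.sum_range_succ (fun i => (-1 : ℂ) ^ i * (n.choose i : ℂ) * ((n : ℂ) - i) *
        (a + i) * (b + i) * poch a i * poch b i * poch (c + 1 + i) (n - 1 - i) *
        poch (d + 2 + i) (n - 1 - i)) n]
      rw [neg_add, sub_self]
      simp only [mul_zero, zero_mul, neg_zero, add_zero]
      rw [← Finset.sum_neg_distrib]
      apply Finset.sum_congr rfl
      intro i hi
      simp only [Finset.mem_range] at hi
      have hcc : ((n.choose (i+1) * (i+1) : ℕ) : ℂ) = (n.choose i : ℂ) * ((n : ℂ) - i) := by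
        rw [Nat.choose_succ_right_eq]
        push_cast [Nat.cast_sub (by omega : i ≤ n)]
        ring
      push_cast at hcc
      have e1 : n - (i+1) = n - 1 - i := by omega
      rw [e1, poch_succ a i, poch_succ b i]
      push_cast
      rw [show c + ((i:ℂ)+1) = c + 1 + i from by ring, show d + 1 + ((i:ℂ)+1) = d + 2 + i from by ring]
      calc (-1:ℂ) ^ (i+1) * (n.choose (i+1) : ℂ) * ((i:ℂ)+1) * (poch a i * (a + i)) *
            (poch b i * (b + i)) * poch (c + 1 + i) (n - 1 - i) * poch (d + 2 + i) (n - 1 - i)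
          = (-1:ℂ) ^ (i+1) * ((n.choose (i+1) : ℂ) * ((i:ℂ)+1)) * (poch a i * (a + i)) *
            (poch b i * (b + i)) * poch (c + 1 + i) (n - 1 - i) * poch (d + 2 + i) (n - 1 - i) := by
            ring
        _ = _ := by rw [hcc]; ring
    -- assemble
    have hq : ∑ i ∈ range (n + 1), (-1 : ℂ) ^ i * (n.choose i : ℂ) * (a + i) * (b + i) *
          poch a i * poch b i * poch (c + 1 + i) (n - i) * poch (d + 1 + i) (n - i)
        = a * b * ((-1) ^ n * poch (c - a) n * poch (c - b) n) + (c + n) * T1 := by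
      have hdiff := Finset.sum_congr rfl hPQ
      rw [Finset.sum_sub_distrib, ih2', ← Finset.mul_sum] at hdiff
      have hw : (∑ i ∈ range (n + 1), (-1 : ℂ) ^ i * (n.choose i : ℂ) * ((n : ℂ) - i) *
          (a + i) * (b + i) * poch a i * poch b i * poch (c + 1 + i) (n - 1 - i) *
          poch (d + 2 + i) (n - 1 - i)) = -T1 := by linear_combination hT1w
      linear_combination -hdiff - (c + (n:ℂ)) * hw
    rw [hSb, hq]
    rw [show ((n:ℕ)+1 : ℕ) = n + 1 from rfl, poch_succ (c-a) n, poch_succ (c-b) n, pow_succ]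
    rw [hd]
    ring

lemma neg_one_sq_pow (n : ℕ) : ((-1 : ℂ)) ^ n * (-1) ^ n = 1 := by
  rw [← mul_pow]; norm_num

set_option maxHeartbeats 3200000 in
lemma whipple_cleared (n : ℕ) (A B C D E F : ℂ)
    (hDdef : D = A + B + C + 1 - n - E - F) :
    poch (A + 1 - n - E) n * poch (A + 1 - n - F) n *
      ∑ k ∈ range (n + 1), (-1 : ℂ) ^ k * (n.choose k : ℂ) * poch A k * poch B k * poch C k *
        poch (D + k) (n - k) * poch (E + k) (n - k) * poch (F + k) (n - k)
    = poch (E - A) n * poch (F - A) n *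
      ∑ k ∈ range (n + 1), (-1 : ℂ) ^ k * (n.choose k : ℂ) * poch A k * poch (D - B) k *
        poch (D - C) k * poch (D + k) (n - k) * poch (A + 1 - n - E + k) (n - k) *
        poch (A + 1 - n - F + k) (n - k) := by
  -- the double-sum summand
  set f : ℕ → ℕ → ℂ := fun k j => (-1 : ℂ) ^ j * (n.choose k : ℂ) * (k.choose j : ℂ) *
      poch (D - B) j * poch (D - C) j * poch (D + j) (k - j) *
      poch (1 + D - B - C - k + j) (k - j) *
      poch A k * poch (D + k) (n - k) * poch (E + k) (n - k) * poch (F + k) (n - k) with hf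
  -- Step 1: expand B,C pochhammers via Saalschütz
  have step1 : (∑ k ∈ range (n + 1), (-1 : ℂ) ^ k * (n.choose k : ℂ) * poch A k * poch B k *
        poch C k * poch (D + k) (n - k) * poch (E + k) (n - k) * poch (F + k) (n - k))
      = ∑ k ∈ range (n + 1), ∑ j ∈ range (k + 1), f k j := by
    apply Finset.sum_congr rfl
    intro k _
    have h := saalschutz k (D - B) (D - C) D
    rw [show D - (D - B) = B from by ring, show D - (D - C) = C from by ring] at h
    have h' : (∑ j ∈ range (k + 1), (-1 : ℂ) ^ j * (k.choose j : ℂ) * poch (D - B) j *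
          poch (D - C) j * poch (D + j) (k - j) * poch (1 + D - B - C - k + j) (k - j))
        = (-1 : ℂ) ^ k * poch B k * poch C k := by
      rw [← h]
      apply Finset.sum_congr rfl
      intro j _
      rw [show (1 : ℂ) + D - B - C - k + j = 1 + (D - B) + (D - C) - D - k + j from by ring]
    calc (-1 : ℂ) ^ k * (n.choose k : ℂ) * poch A k * poch B k *
          poch C k * poch (D + k) (n - k) * poch (E + k) (n - k) * poch (F + k) (n - k)
        = ((n.choose k : ℂ) * poch A k * poch (D + k) (n - k) * poch (E + k) (n - k) *
            poch (F + k) (n - k)) * ((-1 : ℂ) ^ k * poch B k * poch C k) := by ring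
      _ = ((n.choose k : ℂ) * poch A k * poch (D + k) (n - k) * poch (E + k) (n - k) *
            poch (F + k) (n - k)) * (∑ j ∈ range (k + 1), (-1 : ℂ) ^ j * (k.choose j : ℂ) *
            poch (D - B) j * poch (D - C) j * poch (D + j) (k - j) *
            poch (1 + D - B - C - k + j) (k - j)) := by rw [h']
      _ = ∑ j ∈ range (k + 1), f k j := by
          rw [Finset.mul_sum]
          apply Finset.sum_congr rfl
          intro j _
          rw [hf]; ring
  -- Step 2: swap the order of summation
  have step2 : (∑ k ∈ range (n + 1), ∑ j ∈ range (k + 1), f k j)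
      = ∑ j ∈ range (n + 1), ∑ k ∈ Finset.Ico j (n + 1), f k j := by
    have h := Finset.sum_Ico_Ico_comm 0 (n + 1) (fun j k => f k j)
    simp only [Nat.Ico_zero_eq_range] at h
    exact h.symm
  -- Step 3: reindex inner sum
  have step3 : (∑ j ∈ range (n + 1), ∑ k ∈ Finset.Ico j (n + 1), f k j)
      = ∑ j ∈ range (n + 1), ∑ m ∈ range (n + 1 - j), f (j + m) j := by
    apply Finset.sum_congr rfl
    intro j _
    exact Finset.sum_Ico_eq_sum_range (f := fun k => f k j) (m := j) (n := n + 1)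
  -- Step 4: evaluate inner sum by Saalschütz
  have step4 : ∀ j ∈ range (n + 1),
      (∑ m ∈ range (n + 1 - j), f (j + m) j)
      = ((-1 : ℂ) ^ j * (n.choose j : ℂ) * poch A j * poch (D - B) j * poch (D - C) j *
          poch (D + j) (n - j)) *
        ((-1 : ℂ) ^ (n - j) * poch (E - A) (n - j) * poch (A + 1 - n - F + j) (n - j)) := by
    intro j hj
    simp only [Finset.mem_range] at hj
    have hjn : j ≤ n := by omega
    have hG := saalschutz (n - j) (A + j) (E + F + (n : ℂ) - 1 - A) (E + j)
    rw [show E + (j : ℂ) - (A + j) = E - A from by ring,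
      show E + (j : ℂ) - (E + F + (n : ℂ) - 1 - A) = A + 1 - n - F + j from by ring] at hG
    rw [show n + 1 - j = (n - j) + 1 from by omega]
    rw [← hG, Finset.mul_sum]
    apply Finset.sum_congr rfl
    intro m hm
    simp only [Finset.mem_range] at hm
    have hmn : m ≤ n - j := by omega
    have hjmn : j + m ≤ n := by omega
    rw [hf]
    simp only
    -- choose identity
    have hch : ((n.choose (j + m)) : ℂ) * ((j + m).choose j : ℂ) =
        (n.choose j : ℂ) * ((n - j).choose m : ℂ) := by
      have h1 := Nat.choose_mul (n := n) (show j ≤ j + m from by omega)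
      have h2 : j + m - j = m := by omega
      rw [h2] at h1
      exact_mod_cast congrArg (Nat.cast : ℕ → ℂ) h1
    -- pochhammer splits
    have hA : poch A (j + m) = poch A j * poch (A + j) m := poch_add A j m
    have hsub1 : j + m - j = m := by omega
    have hsub2 : n - (j + m) = (n - j) - m := by omega
    have hD2 : poch (D + j) m * poch (D + (j + m : ℕ)) (n - (j + m)) = poch (D + j) (n - j) := by
      have h1 : poch (D + j) (m + (n - j - m)) = poch (D + j) m * poch (D + j + m) (n - j - m) :=
        poch_add _ m _
      rw [show m + (n - j - m) = n - j from by omega] at h1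
      rw [h1, hsub2]
      congr 2
      push_cast; ring
    have hrefl : poch (1 + D - B - C - ((j + m : ℕ) : ℂ) + j) m
        = (-1 : ℂ) ^ m * poch (E + F + (n : ℂ) - 1 - A) m := by
      rw [poch_reflect (1 + D - B - C - ((j + m : ℕ) : ℂ) + j) m]
      congr 1
      rw [hDdef]
      push_cast
      ring
    have hE2 : poch (E + ((j + m : ℕ) : ℂ)) (n - (j + m)) = poch (E + j + m) ((n - j) - m) := by
      rw [hsub2]; congr 1; push_cast; ring
    have hF2 : poch (F + ((j + m : ℕ) : ℂ)) (n - (j + m)) = poch (F + j + m) ((n - j) - m) := by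
      rw [hsub2]; congr 1; push_cast; ring
    have hbase : (1 : ℂ) + (A + j) + (E + F + (n : ℂ) - 1 - A) - (E + j) - ((n - j : ℕ) : ℂ) + m
        = F + j + m := by
      rw [Nat.cast_sub hjn]; ring
    rw [hsub1, hA, hrefl, hE2, hF2, hbase]
    linear_combination
      (((-1:ℂ))^j * (-1)^m * poch (D-B) j * poch (D-C) j * poch A j * poch (A+(j:ℂ)) m *
        poch (E+F+(n:ℂ)-1-A) m * poch (E+(j:ℂ)+m) (n-j-m) * poch (F+(j:ℂ)+m) (n-j-m) *
        poch (D+(j:ℂ)) m * poch (D + ((j+m : ℕ):ℂ)) (n-(j+m))) * hch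
      + (((-1:ℂ))^j * (-1)^m * poch (D-B) j * poch (D-C) j * poch A j * poch (A+(j:ℂ)) m *
        poch (E+F+(n:ℂ)-1-A) m * poch (E+(j:ℂ)+m) (n-j-m) * poch (F+(j:ℂ)+m) (n-j-m) *
        ((n.choose j : ℂ) * (((n-j).choose m : ℕ) : ℂ))) * hD2
  -- assemble
  rw [step1, step2, step3, Finset.sum_congr rfl step4, Finset.mul_sum, Finset.mul_sum]
  apply Finset.sum_congr rfl
  intro j hj
  simp only [Finset.mem_range] at hj
  have hjn : j ≤ n := by omega
  have h1 : poch (A + 1 - (n:ℂ) - E) n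
      = poch (A + 1 - (n:ℂ) - E) j * poch (A + 1 - (n:ℂ) - E + j) (n - j) := by
    rw [← poch_add]; congr 1; omega
  have h2 : poch (A + 1 - (n:ℂ) - E) j = (-1:ℂ)^j * poch ((E - A) + ((n - j : ℕ) : ℂ)) j := by
    rw [poch_reflect (A + 1 - (n:ℂ) - E) j,
      show (1:ℂ) - (A + 1 - (n:ℂ) - E) - (j:ℂ) = (E - A) + ((n - j : ℕ) : ℂ) from by
        rw [Nat.cast_sub hjn]; ring]
  have h3 : poch (E - A) (n - j) * poch ((E - A) + ((n - j : ℕ) : ℂ)) j = poch (E - A) n := by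
    rw [← poch_add]; congr 1; omega
  have h4 : poch (A + 1 - (n:ℂ) - F) n = (-1:ℂ)^n * poch (F - A) n := by
    rw [poch_reflect (A + 1 - (n:ℂ) - F) n,
      show (1:ℂ) - (A + 1 - (n:ℂ) - F) - (n:ℂ) = F - A from by ring]
  have hsgn : ((-1:ℂ))^j * (-1)^n * (-1)^(n - j) = 1 := by
    rw [← pow_add, ← pow_add, show j + n + (n - j) = 2 * n from by omega, pow_mul]
    norm_num
  rw [h1, h2, h4, ← h3]
  linear_combination
    (poch ((E - A) + ((n - j : ℕ) : ℂ)) j * poch (E - A) (n - j) * poch (F - A) n *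
      poch (A + 1 - (n:ℂ) - E + (j:ℂ)) (n - j) * poch (A + 1 - (n:ℂ) - F + (j:ℂ)) (n - j) *
      ((-1:ℂ))^j * (n.choose j : ℂ) * poch A j * poch (D - B) j * poch (D - C) j *
      poch (D + (j:ℂ)) (n - j)) * hsgn

set_option maxHeartbeats 1600000 in
theorem whipple_transformation (n : ℕ) (A B C D E F : ℂ)
    (hbal : D + E + F = A + B + C + 1 - (n : ℂ))
    (hD : ∀ k : ℕ, k ≤ n → poch D k ≠ 0)
    (hE : ∀ k : ℕ, k ≤ n → poch E k ≠ 0)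
    (hF : ∀ k : ℕ, k ≤ n → poch F k ≠ 0)
    (hE' : ∀ k : ℕ, k ≤ n → poch (A + 1 - (n : ℂ) - E) k ≠ 0)
    (hF' : ∀ k : ℕ, k ≤ n → poch (A + 1 - (n : ℂ) - F) k ≠ 0) :
    ∑ k ∈ Finset.range (n + 1),
        (poch (-(n : ℂ)) k * poch A k * poch B k * poch C k) /
          ((k.factorial : ℂ) * poch D k * poch E k * poch F k)
      = (poch (E - A) n * poch (F - A) n) / (poch E n * poch F n) *
          ∑ k ∈ Finset.range (n + 1),
            (poch (-(n : ℂ)) k * poch A k * poch (D - B) k * poch (D - C) k) /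
              ((k.factorial : ℂ) * poch D k * poch (A + 1 - (n : ℂ) - E) k *
                poch (A + 1 - (n : ℂ) - F) k) := by

  have hDdef : D = A + B + C + 1 - (n : ℂ) - E - F := by linear_combination hbal
  have hDn : poch D n ≠ 0 := hD n le_rfl
  have hEn : poch E n ≠ 0 := hE n le_rfl
  have hFn : poch F n ≠ 0 := hF n le_rfl
  have hEpn : poch (A + 1 - (n : ℂ) - E) n ≠ 0 := hE' n le_rfl
  have hFpn : poch (A + 1 - (n : ℂ) - F) n ≠ 0 := hF' n le_rfl
  have cleared := whipple_cleared n A B C D E F hDdef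
  -- clear denominators in the left sum
  have hSL : (∑ k ∈ Finset.range (n + 1),
        (poch (-(n : ℂ)) k * poch A k * poch B k * poch C k) /
          ((k.factorial : ℂ) * poch D k * poch E k * poch F k))
      * (poch D n * poch E n * poch F n)
      = ∑ k ∈ range (n + 1), (-1 : ℂ) ^ k * (n.choose k : ℂ) * poch A k * poch B k * poch C k *
        poch (D + k) (n - k) * poch (E + k) (n - k) * poch (F + k) (n - k) := by
    rw [Finset.sum_mul]
    apply Finset.sum_congr rfl
    intro k hk
    simp only [Finset.mem_range] at hk
    have hkn : k ≤ n := by omega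
    have hDk : poch D n = poch D k * poch (D + k) (n - k) := by
      rw [← poch_add]; congr 1; omega
    have hEk : poch E n = poch E k * poch (E + k) (n - k) := by
      rw [← poch_add]; congr 1; omega
    have hFk : poch F n = poch F k * poch (F + k) (n - k) := by
      rw [← poch_add]; congr 1; omega
    rw [poch_neg_nat hkn, hDk, hEk, hFk]
    have h1 : poch D k ≠ 0 := hD k hkn
    have h2 : poch E k ≠ 0 := hE k hkn
    have h3 : poch F k ≠ 0 := hF k hkn
    have h4 : (k.factorial : ℂ) ≠ 0 := Nat.cast_ne_zero.mpr (Nat.factorial_ne_zero k)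
    field_simp
  -- clear denominators in the right sum
  have hSR : (∑ k ∈ Finset.range (n + 1),
        (poch (-(n : ℂ)) k * poch A k * poch (D - B) k * poch (D - C) k) /
          ((k.factorial : ℂ) * poch D k * poch (A + 1 - (n : ℂ) - E) k *
            poch (A + 1 - (n : ℂ) - F) k))
      * (poch D n * poch (A + 1 - (n : ℂ) - E) n * poch (A + 1 - (n : ℂ) - F) n)
      = ∑ k ∈ range (n + 1), (-1 : ℂ) ^ k * (n.choose k : ℂ) * poch A k * poch (D - B) k *
        poch (D - C) k * poch (D + k) (n - k) * poch (A + 1 - (n : ℂ) - E + k) (n - k) *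
        poch (A + 1 - (n : ℂ) - F + k) (n - k) := by
    rw [Finset.sum_mul]
    apply Finset.sum_congr rfl
    intro k hk
    simp only [Finset.mem_range] at hk
    have hkn : k ≤ n := by omega
    have hDk : poch D n = poch D k * poch (D + k) (n - k) := by
      rw [← poch_add]; congr 1; omega
    have hEk : poch (A + 1 - (n : ℂ) - E) n
        = poch (A + 1 - (n : ℂ) - E) k * poch (A + 1 - (n : ℂ) - E + k) (n - k) := by
      rw [← poch_add]; congr 1; omega
    have hFk : poch (A + 1 - (n : ℂ) - F) n
        = poch (A + 1 - (n : ℂ) - F) k * poch (A + 1 - (n : ℂ) - F + k) (n - k) := by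
      rw [← poch_add]; congr 1; omega
    rw [poch_neg_nat hkn, hDk, hEk, hFk]
    have h1 : poch D k ≠ 0 := hD k hkn
    have h2 : poch (A + 1 - (n : ℂ) - E) k ≠ 0 := hE' k hkn
    have h3 : poch (A + 1 - (n : ℂ) - F) k ≠ 0 := hF' k hkn
    have h4 : (k.factorial : ℂ) ≠ 0 := Nat.cast_ne_zero.mpr (Nat.factorial_ne_zero k)
    field_simp
  have hX : poch D n * poch E n * poch F n ≠ 0 := by
    exact mul_ne_zero (mul_ne_zero hDn hEn) hFn
  have hY : poch D n * poch (A + 1 - (n : ℂ) - E) n * poch (A + 1 - (n : ℂ) - F) n ≠ 0 := by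
    exact mul_ne_zero (mul_ne_zero hDn hEpn) hFpn
  have h1 := (eq_div_iff hX).mpr hSL
  have h2 := (eq_div_iff hY).mpr hSR
  rw [h1, h2]
  field_simp
  linear_combination cleared
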